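/- Let r ∈ (0,1], κ ∈ (0,1], a = √κ / (1/r + √κ), and b = κ a r². Then a² ≤ (1 − a)(a² + b). -/

import Mathlib

/-- Scalar parameter inequality for accelerated RBCD: with
`a = √κ / (1/r + √κ)` and `b = κ a r²`, one has `a² ≤ (1 − a)(a² + b)`. -/
theorem stmt16 (r κ : ℝ) (hr0 : 0 < r) (hr1 : r ≤ 1) (hκ0 : 0 < κ) (hκ1 : κ ≤ 1) :
    let a : ℝ := Real.sqrt κ / (1 / r + Real.sqrt κ)
    let b : ℝ := κ * a * r ^ 2
    a ^ 2 ≤ (1 - a) * (a ^ 2 + b) := by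
  intro a b
  set s := Real.sqrt κ with hs
  have hs0 : 0 < s := Real.sqrt_pos.mpr hκ0
  have hs2 : s ^ 2 = κ := Real.sq_sqrt hκ0.le
  have hd : 0 < 1 / r + s := by positivity
  show (s / (1 / r + s)) ^ 2 ≤ (1 - s / (1 / r + s)) *
      ((s / (1 / r + s)) ^ 2 + κ * (s / (1 / r + s)) * r ^ 2)
  rw [div_pow, div_le_iff₀ (by positivity)]
  have hd' : (1 / r + s) ≠ 0 := hd.ne'
  field_simp
  rw [← hs2]
  have h1 : (0:ℝ) < 1 + s * r := by nlinarith [mul_pos hs0 hr0]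
  nlinarith [mul_pos (pow_pos (mul_pos hs0 hr0) 4) (pow_pos h1 3), mul_pos (pow_pos hr0 2) (pow_pos hs0 3)]
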